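/- Let a, b ≥ 2 be integers that are multiplicatively dependent, i.e., there exist positive integers r, s with a^r = b^s. Then there exist c > 0 and K > 0 such that for all sufficiently large x, the number of positive integers n ≤ x with s_a(n) = s_b(n) is at least K x^c. -/

import Mathlib

lemma ofDigits_range_map (a : ℕ) (g : ℕ → ℕ) (N : ℕ) :
    Nat.ofDigits a ((List.range N).map g) = ∑ j ∈ Finset.range N, g j * a ^ j := by
  induction N with
  | zero => simp [Nat.ofDigits_nil]
  | succ n ih =>
      rw [List.range_succ, List.map_append, Nat.ofDigits_append, ih, Finset.sum_range_succ]
      simp [Nat.ofDigits_singleton, mul_comm]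

lemma sum_range_map (g : ℕ → ℕ) (N : ℕ) :
    ((List.range N).map g).sum = ∑ j ∈ Finset.range N, g j := by
  induction N with
  | zero => simp
  | succ n ih => rw [List.range_succ, List.map_append, List.sum_append, ih,
      Finset.sum_range_succ]; simp

lemma digits_sum_pow_mul (a r : ℕ) (ha : 2 ≤ a) (hr : 0 < r) (S : Finset ℕ) (hS : S.Nonempty) :
    Nat.digits a (∑ i ∈ S, a ^ (r * i)) =
      (List.range (r * S.max' hS + 1)).map
        (fun j => if j ∈ S.image (fun i => r * i) then 1 else 0) := by
  set M := S.max' hS with hM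
  set N := r * M + 1 with hN
  set T := S.image (fun i => r * i) with hT
  set g : ℕ → ℕ := fun j => if j ∈ T then 1 else 0 with hg
  have hTsub : T ⊆ Finset.range N := by
    intro j hj
    simp only [hT, Finset.mem_image] at hj
    obtain ⟨i, hi, rfl⟩ := hj
    have : i ≤ M := S.le_max' i hi
    simp only [Finset.mem_range, hN]
    have : r * i ≤ r * M := Nat.mul_le_mul_left r this
    omega
  have hval : ∑ i ∈ S, a ^ (r * i) = Nat.ofDigits a ((List.range N).map g) := by
    rw [ofDigits_range_map]
    have : ∑ j ∈ Finset.range N, g j * a ^ j = ∑ j ∈ T, a ^ j := by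
      rw [hg]
      simp only [ite_mul, one_mul, zero_mul]
      rw [Finset.sum_ite_mem, Finset.inter_eq_right.mpr hTsub]
    rw [this, hT, Finset.sum_image]
    intro i _ j _ h
    exact Nat.eq_of_mul_eq_mul_left hr h
  rw [hval]
  apply Nat.digits_ofDigits a (by omega)
  · intro l hl
    simp only [List.mem_map] at hl
    obtain ⟨j, _, rfl⟩ := hl
    rw [hg]
    dsimp only
    split <;> omega
  · intro h
    have hlen : ((List.range N).map g).length = N := by simp
    rw [List.getLast_eq_getElem]
    have h1 : ((List.range N).map g)[((List.range N).map g).length - 1] =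
        g ((List.range N)[((List.range N).map g).length - 1]'(by simp only [List.length_map, List.length_range]; omega)) := by
      exact List.getElem_map _
    rw [h1]
    have : (List.range N)[((List.range N).map g).length - 1]'(by simp only [List.length_map, List.length_range]; omega) = N - 1 := by
      simp [hlen]
    rw [this]
    have hNm : N - 1 = r * M := by omega
    rw [hNm, hg]
    have : r * M ∈ T := by
      rw [hT]; exact Finset.mem_image_of_mem _ (S.max'_mem hS)
    simp [this]

lemma sum_digits_sum_pow_mul (a r : ℕ) (ha : 2 ≤ a) (hr : 0 < r) (S : Finset ℕ)
    (hS : S.Nonempty) : (Nat.digits a (∑ i ∈ S, a ^ (r * i))).sum = S.card := by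
  rw [digits_sum_pow_mul a r ha hr S hS, sum_range_map]
  rw [Finset.sum_ite_mem, Finset.inter_eq_right.mpr, Finset.sum_const, smul_eq_mul, mul_one,
    Finset.card_image_of_injective _ (fun i j h => Nat.eq_of_mul_eq_mul_left hr h)]
  · intro j hj
    simp only [Finset.mem_image] at hj
    obtain ⟨i, hi, rfl⟩ := hj
    have : i ≤ S.max' hS := S.le_max' i hi
    simp only [Finset.mem_range]
    have : r * i ≤ r * S.max' hS := Nat.mul_le_mul_left r this
    omega

/-- if `a, b ≥ 2` are multiplicatively dependent, then the number of `n ≤ x`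
with `s_a(n) = s_b(n)` is at least `K x^c` for some `c, K > 0` and all large `x`. -/
theorem lower_bound_count_equal_digit_sums_of_mul_dependent
    (a b : ℕ) (ha : 2 ≤ a) (hb : 2 ≤ b)
    (hdep : ∃ r s : ℕ, 0 < r ∧ 0 < s ∧ a ^ r = b ^ s) :
    ∃ c > (0 : ℝ), ∃ K > (0 : ℝ), ∃ x₀ : ℝ, ∀ x ≥ x₀,
      K * x ^ c ≤
        (({n : ℕ | 0 < n ∧ (n : ℝ) ≤ x ∧
            (Nat.digits a n).sum = (Nat.digits b n).sum}.ncard : ℝ)) := by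
  obtain ⟨r, s, hr, hs, hab⟩ := hdep
  set q : ℕ := a ^ r with hqdef
  have hq2 : 2 ≤ q := le_trans ha (Nat.le_self_pow hr.ne' a)
  have hq1R : (1 : ℝ) < (q : ℝ) := by exact_mod_cast hq2.trans_lt' one_lt_two
  have hlogq : 0 < Real.log q := Real.log_pos hq1R
  set c : ℝ := Real.log 2 / (2 * Real.log q) with hc
  have hc0 : 0 < c := div_pos (Real.log_pos one_lt_two) (by linarith)
  refine ⟨c, hc0, 1/2, by norm_num, (q : ℝ), fun x hx => ?_⟩
  -- basic facts about x
  have hx2 : (2 : ℝ) ≤ x := le_trans (by exact_mod_cast hq2) hx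
  have hx0 : (0 : ℝ) ≤ x := by linarith
  have hfloor_ge : q ≤ ⌊x⌋₊ := Nat.le_floor hx
  have hfloor_ne : ⌊x⌋₊ ≠ 0 := by omega
  set m : ℕ := Nat.log q ⌊x⌋₊ with hm
  have hm1 : 1 ≤ m := Nat.log_pos (by omega) hfloor_ge
  have hpow_le : ((q : ℝ)) ^ m ≤ x := by
    calc ((q : ℝ)) ^ m ≤ (⌊x⌋₊ : ℝ) := by exact_mod_cast Nat.pow_log_le_self q hfloor_ne
    _ ≤ x := Nat.floor_le hx0
  have hx_lt : x < ((q : ℝ)) ^ (m + 1) := by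
    have h1 : ⌊x⌋₊ < q ^ (m + 1) := Nat.lt_pow_succ_log_self (by omega) _
    have h2 : x < (⌊x⌋₊ : ℝ) + 1 := Nat.lt_floor_add_one x
    have : ((⌊x⌋₊ : ℝ)) + 1 ≤ ((q : ℝ)) ^ (m + 1) := by exact_mod_cast h1
    linarith
  -- the finset of sums of distinct powers of q
  set f : Finset ℕ → ℕ := fun S => ∑ i ∈ S, q ^ i with hf
  set F : Finset ℕ := ((Finset.range m).powerset.erase ∅).image f with hF
  set E : Set ℕ := {n : ℕ | 0 < n ∧ (n : ℝ) ≤ x ∧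
      (Nat.digits a n).sum = (Nat.digits b n).sum} with hE
  have hEfin : E.Finite := by
    apply Set.Finite.subset (Set.finite_Icc 1 ⌊x⌋₊)
    intro n hn
    exact Set.mem_Icc.mpr ⟨hn.1, Nat.le_floor hn.2.1⟩
  have hsub : (F : Set ℕ) ⊆ E := by
    intro n hn
    simp only [hF, Finset.coe_image, Set.mem_image, Finset.mem_coe, Finset.mem_erase,
      Finset.mem_powerset] at hn
    obtain ⟨S, ⟨hSne, hSsub⟩, rfl⟩ := hn
    have hSne' : S.Nonempty := Finset.nonempty_iff_ne_empty.mpr hSne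
    refine ⟨?_, ?_, ?_⟩
    · exact Finset.sum_pos (fun i _ => Nat.pow_pos (by omega)) hSne'
    · have h1 : f S < q ^ m := Nat.geomSum_lt hq2 (fun k hk => Finset.mem_range.mp (hSsub hk))
      have : ((f S : ℝ)) < ((q : ℝ)) ^ m := by exact_mod_cast h1
      linarith
    · have hfa : f S = ∑ i ∈ S, a ^ (r * i) := by
        simp only [hf, hqdef, ← pow_mul]
      have hfb : f S = ∑ i ∈ S, b ^ (s * i) := by
        simp only [hf, hab, ← pow_mul]
      show (Nat.digits a (f S)).sum = (Nat.digits b (f S)).sum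
      rw [hfa, sum_digits_sum_pow_mul a r ha hr S hSne', ← hfa, hfb,
        sum_digits_sum_pow_mul b s hb hs S hSne']
  have hinj : Set.InjOn f ((Finset.range m).powerset.erase ∅) := fun S _ T _ h =>
    Finset.geomSum_injective hq2 h
  have hcardF : F.card = 2 ^ m - 1 := by
    rw [hF, Finset.card_image_of_injOn hinj, Finset.card_erase_of_mem
      (Finset.empty_mem_powerset _), Finset.card_powerset, Finset.card_range]
  have hFle : (F.card : ℝ) ≤ (E.ncard : ℝ) := by
    exact_mod_cast (by
      rw [← Set.ncard_coe_finset F]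
      exact Set.ncard_le_ncard hsub hEfin : F.card ≤ E.ncard)
  -- real analysis part
  have hqc : (q : ℝ) ^ c = (2 : ℝ) ^ ((1 : ℝ) / 2) := by
    rw [Real.rpow_def_of_pos (by linarith), Real.rpow_def_of_pos (by norm_num)]
    congr 1
    rw [hc]
    field_simp
  have key : x ^ c ≤ (2 : ℝ) ^ m := by
    have h1 : x ^ c ≤ (((q : ℝ)) ^ (m + 1)) ^ c :=
      Real.rpow_le_rpow hx0 hx_lt.le hc0.le
    have h2 : (((q : ℝ)) ^ (m + 1)) ^ c = ((2 : ℝ) ^ ((1 : ℝ) / 2)) ^ (m + 1) := by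
      rw [← Real.rpow_natCast ((q : ℝ)) (m + 1), ← Real.rpow_mul (by linarith),
        mul_comm, Real.rpow_mul (by linarith), hqc, Real.rpow_natCast]
    have h3 : ((2 : ℝ) ^ ((1 : ℝ) / 2)) ^ (m + 1) = (2 : ℝ) ^ (((m : ℝ) + 1) / 2) := by
      rw [← Real.rpow_natCast ((2 : ℝ) ^ ((1 : ℝ) / 2)) (m + 1), ← Real.rpow_mul (by norm_num)]
      push_cast
      ring_nf
    have h4 : (2 : ℝ) ^ (((m : ℝ) + 1) / 2) ≤ (2 : ℝ) ^ ((m : ℕ) : ℝ) := by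
      apply Real.rpow_le_rpow_left_iff (by norm_num : (1:ℝ) < 2) |>.mpr
      have : (1 : ℝ) ≤ (m : ℝ) := by exact_mod_cast hm1
      linarith
    calc x ^ c ≤ _ := h1
      _ = _ := h2
      _ = _ := h3
      _ ≤ (2 : ℝ) ^ ((m : ℕ) : ℝ) := h4
      _ = (2 : ℝ) ^ m := Real.rpow_natCast 2 m
  have hcast : ((2 ^ m - 1 : ℕ) : ℝ) = (2 : ℝ) ^ m - 1 := by
    have : 1 ≤ 2 ^ m := Nat.one_le_two_pow
    push_cast [this]
    ring
  have h2m : (2 : ℝ) ≤ (2 : ℝ) ^ m := by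
    calc (2 : ℝ) = 2 ^ 1 := (pow_one 2).symm
    _ ≤ 2 ^ m := pow_le_pow_right₀ one_le_two hm1
  calc (1/2 : ℝ) * x ^ c ≤ (1/2) * (2 : ℝ) ^ m := by nlinarith
    _ ≤ (2 : ℝ) ^ m - 1 := by nlinarith
    _ = ((2 ^ m - 1 : ℕ) : ℝ) := hcast.symm
    _ = (F.card : ℝ) := by rw [hcardF]
    _ ≤ _ := hFle
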